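/- Let H ∈ (0,1) and define p : ℝ × (0,∞) → ℝ by p(x,t) = (2/π) ∫₀^∞ (exp(−x²/(2s^{2H}))/√(2π s^{2H})) · (t/(t²+s²)) ds. Then for every x ≠ 0 and t > 0, p satisfies t² ∂²p/∂t² = −H(H−1) ∂/∂x ( x·p(x,t) ) + H² ∂²/∂x² ( x²·p(x,t) ). -/

import Mathlib

open Real MeasureTheory

/-- Density of `B_H(|C(t)|)`: a fractional Brownian motion with Hurst parameter `H`
composed with the absolute value of an independent standard Cauchy process. -/
noncomputable def fbmCauchyDensity (H : ℝ) (x t : ℝ) : ℝ :=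
  (2 / π) * ∫ s in Set.Ioi (0 : ℝ),
    (Real.exp (-x ^ 2 / (2 * s ^ (2 * H))) / Real.sqrt (2 * π * s ^ (2 * H))) *
      (t / (t ^ 2 + s ^ 2))

open Real MeasureTheory Set Filter Topology

noncomputable def gg (H x s : ℝ) : ℝ :=
  (Real.sqrt (2 * π))⁻¹ * s ^ (-H) * Real.exp (-x ^ 2 / 2 * s ^ (-(2 * H)))

noncomputable def CC (t s : ℝ) : ℝ := t / (t ^ 2 + s ^ 2)
noncomputable def Ct1 (t s : ℝ) : ℝ := (s ^ 2 - t ^ 2) / (t ^ 2 + s ^ 2) ^ 2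
noncomputable def Ct2 (t s : ℝ) : ℝ := 2 * t * (t ^ 2 - 3 * s ^ 2) / (t ^ 2 + s ^ 2) ^ 3
noncomputable def Cs1 (t s : ℝ) : ℝ := -(2 * t * s) / (t ^ 2 + s ^ 2) ^ 2
noncomputable def gs1 (H x s : ℝ) : ℝ := H * (x ^ 2 * s ^ (-(2 * H)) - 1) / s * gg H x s
noncomputable def gs2 (H x s : ℝ) : ℝ :=
  (H ^ 2 * (x ^ 2 * s ^ (-(2 * H)) - 1) ^ 2 - 2 * H ^ 2 * x ^ 2 * s ^ (-(2 * H))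
    - H * (x ^ 2 * s ^ (-(2 * H)) - 1)) / s ^ 2 * gg H x s
noncomputable def gx1 (H x s : ℝ) : ℝ := -(x * s ^ (-(2 * H))) * gg H x s
noncomputable def gx2 (H x s : ℝ) : ℝ :=
  (x ^ 2 * (s ^ (-(2 * H))) ^ 2 - s ^ (-(2 * H))) * gg H x s
noncomputable def Phi (H x t s : ℝ) : ℝ :=
  t ^ 2 * (gg H x s * Cs1 t s - gs1 H x s * CC t s) + t * gs1 H x s




lemma sqrt_two_pi_pos : 0 < Real.sqrt (2 * π) := Real.sqrt_pos.2 (by positivity)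

lemma hgg_x (H x s : ℝ) : HasDerivAt (fun y => gg H y s) (gx1 H x s) x := by
  unfold gg gx1
  have h1 : HasDerivAt (fun y : ℝ => -y ^ 2 / 2 * s ^ (-(2 * H)))
      (-(x * s ^ (-(2 * H)))) x := by
    have := ((hasDerivAt_pow 2 x).neg.div_const 2).mul_const (s ^ (-(2 * H)))
    refine this.congr_deriv ?_
    ring
  have h2 := (h1.exp).const_mul ((Real.sqrt (2 * π))⁻¹ * s ^ (-H))
  refine h2.congr_deriv ?_
  unfold gg
  ring_nf

lemma hgx1_x (H x s : ℝ) : HasDerivAt (fun y => gx1 H y s) (gx2 H x s) x := by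
  unfold gx1
  have h1 : HasDerivAt (fun y : ℝ => -(y * s ^ (-(2 * H)))) (-(1 * s ^ (-(2 * H)))) x :=
    ((hasDerivAt_id x).mul_const _).neg
  have := h1.mul (hgg_x H x s)
  refine this.congr_deriv ?_
  unfold gx2 gx1
  ring

lemma hCC_t (t s : ℝ) (ht : 0 < t) : HasDerivAt (fun τ => CC τ s) (Ct1 t s) t := by
  unfold CC Ct1
  have hne : t ^ 2 + s ^ 2 ≠ 0 := by positivity
  have := (hasDerivAt_id t).div ((hasDerivAt_pow 2 t).add_const (s ^ 2)) hne
  refine this.congr_deriv ?_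
  simp only [id_eq]
  field_simp
  ring

lemma hCt1_t (t s : ℝ) (ht : 0 < t) : HasDerivAt (fun τ => Ct1 τ s) (Ct2 t s) t := by
  unfold Ct1 Ct2
  have hne : t ^ 2 + s ^ 2 ≠ 0 := by positivity
  have hne2 : (t ^ 2 + s ^ 2) ^ 2 ≠ 0 := pow_ne_zero _ hne
  have hnum : HasDerivAt (fun τ : ℝ => s ^ 2 - τ ^ 2) (-(2 * t ^ 1)) t :=
    ((hasDerivAt_pow 2 t).const_sub (s ^ 2))
  have hden : HasDerivAt (fun τ : ℝ => (τ ^ 2 + s ^ 2) ^ 2)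
      (2 * (t ^ 2 + s ^ 2) ^ 1 * (2 * t ^ 1)) t :=
    ((hasDerivAt_pow 2 t).add_const (s ^ 2)).pow 2
  have := hnum.div hden hne2
  refine this.congr_deriv ?_
  field_simp
  ring

lemma hCC_s (t s : ℝ) (ht : 0 < t) : HasDerivAt (CC t) (Cs1 t s) s := by
  unfold CC Cs1
  have hne : t ^ 2 + s ^ 2 ≠ 0 := by positivity
  have := (hasDerivAt_const s t).div ((hasDerivAt_pow 2 s).const_add (t ^ 2)) hne
  refine this.congr_deriv ?_
  field_simp
  ring

lemma hCs1_s (t s : ℝ) (ht : 0 < t) :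
    HasDerivAt (fun u => Cs1 t u) (-(2 * t) * (t ^ 2 - 3 * s ^ 2) / (t ^ 2 + s ^ 2) ^ 3) s := by
  unfold Cs1
  have hne : t ^ 2 + s ^ 2 ≠ 0 := by positivity
  have hne2 : (t ^ 2 + s ^ 2) ^ 2 ≠ 0 := pow_ne_zero _ hne
  have hnum : HasDerivAt (fun u : ℝ => -(2 * t * u)) (-(2 * t * 1)) s := by
    have := ((hasDerivAt_id s).const_mul (2 * t)).neg
    exact this
  have hden : HasDerivAt (fun u : ℝ => (t ^ 2 + u ^ 2) ^ 2)
      (2 * (t ^ 2 + s ^ 2) ^ 1 * (2 * s ^ 1)) s :=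
    ((hasDerivAt_pow 2 s).const_add (t ^ 2)).pow 2
  have := hnum.div hden hne2
  refine this.congr_deriv ?_
  field_simp
  ring

lemma rpow_sub_one' {s : ℝ} (hs : 0 < s) (c : ℝ) : s ^ (c - 1) = s ^ c / s := by
  rw [Real.rpow_sub hs, Real.rpow_one]

lemma hgg_s (H x s : ℝ) (hs : 0 < s) : HasDerivAt (gg H x) (gs1 H x s) s := by
  have hσ : HasDerivAt (fun u : ℝ => u ^ (-(2 * H))) (-(2 * H) * s ^ (-(2 * H) - 1)) s :=
    Real.hasDerivAt_rpow_const (Or.inl hs.ne')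
  have hρ : HasDerivAt (fun u : ℝ => u ^ (-H)) (-H * s ^ (-H - 1)) s :=
    Real.hasDerivAt_rpow_const (Or.inl hs.ne')
  have hE : HasDerivAt (fun u : ℝ => Real.exp (-x ^ 2 / 2 * u ^ (-(2 * H))))
      (Real.exp (-x ^ 2 / 2 * s ^ (-(2 * H))) * (-x ^ 2 / 2 * (-(2 * H) * s ^ (-(2 * H) - 1)))) s :=
    (hσ.const_mul (-x ^ 2 / 2)).exp
  have h := ((hρ.const_mul ((Real.sqrt (2 * π))⁻¹)).mul hE)
  have hfun : gg H x = fun u : ℝ =>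
      (Real.sqrt (2 * π))⁻¹ * u ^ (-H) * Real.exp (-x ^ 2 / 2 * u ^ (-(2 * H))) := rfl
  rw [hfun]
  refine h.congr_deriv ?_
  unfold gs1 gg
  rw [rpow_sub_one' hs, rpow_sub_one' hs]
  have hsne : s ≠ 0 := hs.ne'
  field_simp
  ring

lemma hgs1_s (H x s : ℝ) (hs : 0 < s) :
    HasDerivAt (fun u => gs1 H x u) (gs2 H x s) s := by
  have hσ : HasDerivAt (fun u : ℝ => u ^ (-(2 * H))) (-(2 * H) * s ^ (-(2 * H) - 1)) s :=
    Real.hasDerivAt_rpow_const (Or.inl hs.ne')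
  have ha : HasDerivAt (fun u : ℝ => H * (x ^ 2 * u ^ (-(2 * H)) - 1))
      (H * (x ^ 2 * (-(2 * H) * s ^ (-(2 * H) - 1)))) s :=
    ((hσ.const_mul (x ^ 2)).sub_const 1).const_mul H
  have hb := ha.div (hasDerivAt_id s) hs.ne'
  have h := hb.mul (hgg_s H x s hs)
  have hfun : (fun u => gs1 H x u)
      = fun u => H * (x ^ 2 * u ^ (-(2 * H)) - 1) / u * gg H x u := rfl
  rw [hfun]
  refine h.congr_deriv ?_
  unfold gs2 gs1
  rw [rpow_sub_one' hs]
  simp only [id_eq, Pi.div_apply]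
  have hsne : s ≠ 0 := hs.ne'
  field_simp
  ring

lemma hPhi_s (H x t s : ℝ) (hs : 0 < s) (ht : 0 < t) :
    HasDerivAt (fun u => Phi H x t u)
      (t ^ 2 * (gg H x s * (-(2 * t) * (t ^ 2 - 3 * s ^ 2) / (t ^ 2 + s ^ 2) ^ 3)
        - gs2 H x s * CC t s) + t * gs2 H x s) s := by
  have h1 := ((hgg_s H x s hs).mul (hCs1_s t s ht)).sub
    ((hgs1_s H x s hs).mul (hCC_s t s ht))
  have h2 := (h1.const_mul (t ^ 2)).add ((hgs1_s H x s hs).const_mul t)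
  have hfun : (fun u => Phi H x t u) = fun u =>
      t ^ 2 * (gg H x u * Cs1 t u - gs1 H x u * CC t u) + t * gs1 H x u := rfl
  rw [hfun]
  refine h2.congr_deriv ?_
  ring

lemma key_id (H x t s : ℝ) (hs : 0 < s) (ht : 0 < t) :
    t ^ 2 * (gg H x s * (-(2 * t) * (t ^ 2 - 3 * s ^ 2) / (t ^ 2 + s ^ 2) ^ 3)
        - gs2 H x s * CC t s) + t * gs2 H x s
      = -(t ^ 2 * (gg H x s * Ct2 t s))
        + (-(H * (H - 1)) * (gg H x s + x * gx1 H x s)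
            + H ^ 2 * (2 * gg H x s + 4 * x * gx1 H x s + x ^ 2 * gx2 H x s)) * CC t s := by
  have hsne : s ≠ 0 := hs.ne'
  have hne : t ^ 2 + s ^ 2 ≠ 0 := by positivity
  unfold gs2 gx1 gx2 CC Ct2
  field_simp
  ring


lemma rpow_neg_sub_two {s : ℝ} (hs : 0 < s) (c : ℝ) : s ^ (-c - 2) = s ^ (-c) / s ^ 2 := by
  rw [show -c - 2 = -c - (2:ℕ) by norm_num, Real.rpow_sub hs, Real.rpow_natCast]

lemma meas_aux {f : ℝ → ℝ} (h : ContinuousOn f (Ioi (0:ℝ))) :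
    AEStronglyMeasurable f (volume.restrict (Ioi (0:ℝ))) :=
  h.aestronglyMeasurable measurableSet_Ioi

lemma cont_rpow_div {c k : ℝ} (hk : 0 < k) :
    ContinuousOn (fun s : ℝ => s ^ c / (k + s ^ 2)) (Ioi (0:ℝ)) :=
  ContinuousOn.div
    (continuousOn_id.rpow_const fun s hs => Or.inl (ne_of_gt hs)) (by fun_prop)
    fun s _ => by positivity

/-- master integrability without exponential -/
lemma int_master1 {H : ℝ} (hH : 0 < H) (hH1 : H < 1) {k : ℝ} (hk : 0 < k) :
    IntegrableOn (fun s => s ^ (-H) / (k + s ^ 2)) (Ioi (0:ℝ)) := by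
  have hmeas := meas_aux (cont_rpow_div (c := -H) hk)
  rw [show Ioi (0:ℝ) = Ioc 0 1 ∪ Ioi 1 from (Set.Ioc_union_Ioi_eq_Ioi zero_le_one).symm]
  refine IntegrableOn.union ?_ ?_
  · have h0 : IntegrableOn (fun s : ℝ => s ^ (-H)) (Ioc (0:ℝ) 1) :=
      (intervalIntegrable_iff_integrableOn_Ioc_of_le zero_le_one).1
        (intervalIntegral.intervalIntegrable_rpow' (by linarith))
    refine Integrable.mono' (h0.mul_const k⁻¹)
      (hmeas.mono_measure (Measure.restrict_mono Ioc_subset_Ioi_self le_rfl))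
      ((ae_restrict_iff' measurableSet_Ioc).2 (Eventually.of_forall fun s hs => ?_))
    have hs0 : 0 < s := hs.1
    have h1 : 0 ≤ s ^ (-H) := Real.rpow_nonneg hs0.le _
    rw [Real.norm_eq_abs, abs_of_nonneg (by positivity), ← div_eq_mul_inv]
    exact div_le_div_of_nonneg_left h1 hk (by nlinarith)
  · refine Integrable.mono'
      (integrableOn_Ioi_rpow_of_lt (show -H - 2 < -1 by linarith) one_pos)
      (hmeas.mono_measure (Measure.restrict_mono (Ioi_subset_Ioi zero_le_one) le_rfl))
      ((ae_restrict_iff' measurableSet_Ioi).2 (Eventually.of_forall fun s hs => ?_))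
    have hs1 : (1:ℝ) < s := hs
    have hs0 : 0 < s := lt_trans one_pos hs1
    have h1 : 0 ≤ s ^ (-H) := Real.rpow_nonneg hs0.le _
    rw [Real.norm_eq_abs, abs_of_nonneg (by positivity), rpow_neg_sub_two hs0]
    apply div_le_div_of_nonneg_left h1 (by positivity)
    nlinarith

/-- master integrability with exponential -/
lemma int_master2 {H : ℝ} (hH : 0 < H) {β ε k : ℝ} (hβ : 0 ≤ β) (hε : 0 < ε) (hk : 0 < k) :
    IntegrableOn (fun s => s ^ (-β) * Real.exp (-(ε * s ^ (-(2 * H)))) / (k + s ^ 2))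
      (Ioi (0:ℝ)) := by
  have hcont : ContinuousOn
      (fun s : ℝ => s ^ (-β) * Real.exp (-(ε * s ^ (-(2 * H)))) / (k + s ^ 2)) (Ioi 0) := by
    refine ContinuousOn.div ?_ (by fun_prop) fun s _ => by positivity
    refine ContinuousOn.mul (continuousOn_id.rpow_const fun s hs => Or.inl (ne_of_gt hs)) ?_
    exact (Real.continuous_exp.comp_continuousOn
      (((continuousOn_id.rpow_const fun s hs => Or.inl (ne_of_gt hs)).const_smul ε).neg))
  have hmeas := meas_aux hcont
  rw [show Ioi (0:ℝ) = Ioc 0 1 ∪ Ioi 1 from (Set.Ioc_union_Ioi_eq_Ioi zero_le_one).symm]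
  refine IntegrableOn.union ?_ ?_
  · set n : ℕ := ⌈β / (2 * H)⌉₊ with hn
    have hβn : β ≤ 2 * H * n := by
      have := Nat.le_ceil (β / (2 * H))
      rw [div_le_iff₀ (by linarith)] at this
      linarith [this]
    set M : ℝ := (n.factorial : ℝ) * ε⁻¹ ^ n / k with hM
    have h0 : IntegrableOn (fun _ : ℝ => M) (Ioc (0:ℝ) 1) :=
      integrableOn_const measure_Ioc_lt_top.ne
    refine Integrable.mono' h0
      (hmeas.mono_measure (Measure.restrict_mono Ioc_subset_Ioi_self le_rfl))
      ((ae_restrict_iff' measurableSet_Ioc).2 (Eventually.of_forall fun s hs => ?_))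
    have hs0 : 0 < s := hs.1
    have hσ : 0 < s ^ (-(2 * H)) := Real.rpow_pos_of_pos hs0 _
    have hexp : Real.exp (-(ε * s ^ (-(2 * H)))) ≤
        (n.factorial : ℝ) * ε⁻¹ ^ n * (s ^ (-(2 * H)))⁻¹ ^ n := by
      rw [Real.exp_neg]
      have h1 := Real.pow_div_factorial_le_exp (x := ε * s ^ (-(2 * H))) (by positivity) n
      have h2 : 0 < (ε * s ^ (-(2 * H))) ^ n / (n.factorial : ℝ) := by positivity
      calc (Real.exp (ε * s ^ (-(2 * H))))⁻¹
          ≤ ((ε * s ^ (-(2 * H))) ^ n / (n.factorial : ℝ))⁻¹ := by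
            exact inv_anti₀ h2 h1
        _ = (n.factorial : ℝ) * ε⁻¹ ^ n * (s ^ (-(2 * H)))⁻¹ ^ n := by
            rw [mul_pow]
            rw [inv_div]
            ring
    have hpow : (s ^ (-(2 * H)))⁻¹ ^ n = s ^ (2 * H * (n:ℝ)) := by
      rw [Real.rpow_neg hs0.le, inv_inv, ← Real.rpow_natCast (s ^ (2 * H)) n,
        ← Real.rpow_mul hs0.le]
    rw [hpow] at hexp
    have h1 : 0 ≤ s ^ (-β) := Real.rpow_nonneg hs0.le _
    rw [Real.norm_eq_abs, abs_of_nonneg (by positivity)]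
    calc s ^ (-β) * Real.exp (-(ε * s ^ (-(2 * H)))) / (k + s ^ 2)
        ≤ s ^ (-β) * ((n.factorial : ℝ) * ε⁻¹ ^ n * s ^ (2 * H * (n:ℝ))) / k := by
          refine div_le_div₀ (by positivity) ?_ hk (by nlinarith)
          exact mul_le_mul_of_nonneg_left hexp h1
      _ = ((n.factorial : ℝ) * ε⁻¹ ^ n / k) * (s ^ (-β) * s ^ (2 * H * (n:ℝ))) := by ring
      _ = M * s ^ (2 * H * (n:ℝ) - β) := by
          rw [← Real.rpow_add hs0, show -β + 2 * H * (n:ℝ) = 2 * H * (n:ℝ) - β by ring]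
      _ ≤ M * 1 := by
          refine mul_le_mul_of_nonneg_left ?_ (by positivity)
          exact Real.rpow_le_one hs0.le hs.2 (by linarith)
      _ = M := mul_one M
  · refine Integrable.mono'
      (integrableOn_Ioi_rpow_of_lt (show -β - 2 < -1 by linarith) one_pos)
      (hmeas.mono_measure (Measure.restrict_mono (Ioi_subset_Ioi zero_le_one) le_rfl))
      ((ae_restrict_iff' measurableSet_Ioi).2 (Eventually.of_forall fun s hs => ?_))
    have hs1 : (1:ℝ) < s := hs
    have hs0 : 0 < s := lt_trans one_pos hs1
    have h1 : 0 ≤ s ^ (-β) := Real.rpow_nonneg hs0.le _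
    rw [Real.norm_eq_abs, abs_of_nonneg (by positivity), rpow_neg_sub_two hs0]
    refine div_le_div₀ h1 ?_ (by positivity) (by nlinarith)
    exact mul_le_of_le_one_right h1 (Real.exp_le_one_iff.2 (neg_nonpos.2 (by positivity)))

lemma gg_nonneg (H x : ℝ) {s : ℝ} (hs : 0 ≤ s) : 0 ≤ gg H x s := by
  unfold gg
  have := Real.rpow_nonneg hs (-H)
  positivity

lemma gg_le {H y s : ℝ} (hs : 0 ≤ s) :
    gg H y s ≤ (Real.sqrt (2 * π))⁻¹ * s ^ (-H) := by
  unfold gg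
  refine mul_le_of_le_one_right (by positivity) (Real.exp_le_one_iff.2 ?_)
  have h := Real.rpow_nonneg hs (-(2 * H))
  nlinarith [sq_nonneg y]

lemma gg_le_exp {H y s ε : ℝ} (hs : 0 ≤ s) (h : 2 * ε ≤ y ^ 2) :
    gg H y s ≤ (Real.sqrt (2 * π))⁻¹ * s ^ (-H) * Real.exp (-(ε * s ^ (-(2 * H)))) := by
  unfold gg
  refine mul_le_mul_of_nonneg_left (Real.exp_le_exp.2 ?_) (by positivity)
  have hσ := Real.rpow_nonneg hs (-(2 * H))
  nlinarith

lemma cont_rpow' (c : ℝ) : ContinuousOn (fun s : ℝ => s ^ c) (Ioi (0:ℝ)) :=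
  continuousOn_id.rpow_const fun s hs => Or.inl (ne_of_gt hs)

lemma cont_gg (H x : ℝ) : ContinuousOn (fun s => gg H x s) (Ioi (0:ℝ)) := by
  unfold gg
  exact ((continuousOn_const.mul (cont_rpow' (-H))).mul
    (Real.continuous_exp.comp_continuousOn (continuousOn_const.mul (cont_rpow' (-(2 * H))))))

lemma cont_gx1 (H x : ℝ) : ContinuousOn (fun s => gx1 H x s) (Ioi (0:ℝ)) := by
  unfold gx1
  exact ((continuousOn_const.mul (cont_rpow' (-(2 * H)))).neg.mul (cont_gg H x))

lemma cont_gx2 (H x : ℝ) : ContinuousOn (fun s => gx2 H x s) (Ioi (0:ℝ)) := by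
  unfold gx2
  exact (((continuousOn_const.mul ((cont_rpow' (-(2 * H))).pow 2)).sub
    (cont_rpow' (-(2 * H)))).mul (cont_gg H x))

lemma cont_CC (t : ℝ) : ContinuousOn (fun s => CC t s) (Ioi (0:ℝ)) := by
  unfold CC
  exact ContinuousOn.div continuousOn_const (by fun_prop) fun s hs => by
    have : (0:ℝ) < s := hs; positivity

lemma cont_Ct1 (t : ℝ) : ContinuousOn (fun s => Ct1 t s) (Ioi (0:ℝ)) := by
  unfold Ct1
  exact ContinuousOn.div (by fun_prop) (by fun_prop) fun s hs => by
    have : (0:ℝ) < s := hs; positivity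

lemma cont_Ct2 (t : ℝ) : ContinuousOn (fun s => Ct2 t s) (Ioi (0:ℝ)) := by
  unfold Ct2
  exact ContinuousOn.div (by fun_prop) (by fun_prop) fun s hs => by
    have : (0:ℝ) < s := hs; positivity

lemma intOn_gg_CC {H : ℝ} (hH : 0 < H) (hH1 : H < 1) (x : ℝ) {t : ℝ} (ht : 0 < t) :
    IntegrableOn (fun s => gg H x s * CC t s) (Ioi (0:ℝ)) := by
  have hmain := (int_master1 hH hH1 (k := t ^ 2) (by positivity)).const_mul
    ((Real.sqrt (2 * π))⁻¹ * t)
  refine Integrable.mono' hmain (meas_aux ((cont_gg H x).mul (cont_CC t)))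
    ((ae_restrict_iff' measurableSet_Ioi).2 (Eventually.of_forall fun s hs => ?_))
  have hs0 : (0:ℝ) < s := hs
  have hCC : 0 ≤ CC t s := by unfold CC; positivity
  rw [Real.norm_eq_abs, abs_of_nonneg (mul_nonneg (gg_nonneg H x hs0.le) hCC)]
  calc gg H x s * CC t s ≤ ((Real.sqrt (2 * π))⁻¹ * s ^ (-H)) * CC t s :=
        mul_le_mul_of_nonneg_right (gg_le hs0.le) hCC
    _ = (Real.sqrt (2 * π))⁻¹ * t * (s ^ (-H) / (t ^ 2 + s ^ 2)) := by unfold CC; ring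

/-- t-derivative under the integral, first order -/
lemma hasDeriv_T1 {H : ℝ} (hH : 0 < H) (hH1 : H < 1) (x : ℝ) {t : ℝ} (ht : 0 < t) :
    Integrable (fun s => gg H x s * Ct1 t s) (volume.restrict (Ioi (0:ℝ))) ∧
      HasDerivAt (fun τ => ∫ s in Ioi (0:ℝ), gg H x s * CC τ s)
        (∫ s in Ioi (0:ℝ), gg H x s * Ct1 t s) t := by
  have hk : (0:ℝ) < (t / 2) ^ 2 := by positivity
  apply hasDerivAt_integral_of_dominated_loc_of_deriv_le (s := Metric.ball t (t / 2))
    (F := fun τ s => gg H x s * CC τ s) (F' := fun τ s => gg H x s * Ct1 τ s)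
    (bound := fun s => (Real.sqrt (2 * π))⁻¹ * (s ^ (-H) / ((t / 2) ^ 2 + s ^ 2)))
    (Metric.ball_mem_nhds t (half_pos ht))
  · exact Eventually.of_forall fun τ => meas_aux ((cont_gg H x).mul (cont_CC τ))
  · exact intOn_gg_CC hH hH1 x ht
  · exact meas_aux ((cont_gg H x).mul (cont_Ct1 t))
  · refine (ae_restrict_iff' measurableSet_Ioi).2 (Eventually.of_forall fun s hs τ hτ => ?_)
    have hs0 : (0:ℝ) < s := hs
    have hτ1 : |τ - t| < t / 2 := by rwa [Metric.mem_ball, Real.dist_eq] at hτ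
    have hτ2 : t / 2 < τ := by cases abs_lt.1 hτ1; linarith
    have hden : (0:ℝ) < τ ^ 2 + s ^ 2 := by positivity
    rw [Real.norm_eq_abs, abs_mul, abs_of_nonneg (gg_nonneg H x hs0.le)]
    have hCt1 : |Ct1 τ s| ≤ 1 / ((t / 2) ^ 2 + s ^ 2) := by
      unfold Ct1
      rw [abs_div, abs_of_nonneg (by positivity : (0:ℝ) ≤ (τ ^ 2 + s ^ 2) ^ 2)]
      have h1 : |s ^ 2 - τ ^ 2| ≤ τ ^ 2 + s ^ 2 := by
        rw [abs_le]; constructor <;> nlinarith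
      calc |s ^ 2 - τ ^ 2| / (τ ^ 2 + s ^ 2) ^ 2 ≤ (τ ^ 2 + s ^ 2) / (τ ^ 2 + s ^ 2) ^ 2 := by
            gcongr
        _ = 1 / (τ ^ 2 + s ^ 2) := by
            field_simp
        _ ≤ 1 / ((t / 2) ^ 2 + s ^ 2) := by
            gcongr
    calc gg H x s * |Ct1 τ s|
        ≤ ((Real.sqrt (2 * π))⁻¹ * s ^ (-H)) * (1 / ((t / 2) ^ 2 + s ^ 2)) := by
          refine mul_le_mul (gg_le hs0.le) hCt1 (abs_nonneg _) (by positivity)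
      _ = (Real.sqrt (2 * π))⁻¹ * (s ^ (-H) / ((t / 2) ^ 2 + s ^ 2)) := by ring
  · exact (int_master1 hH hH1 hk).const_mul _
  · refine (ae_restrict_iff' measurableSet_Ioi).2 (Eventually.of_forall fun s hs τ hτ => ?_)
    have hτ1 : |τ - t| < t / 2 := by rwa [Metric.mem_ball, Real.dist_eq] at hτ
    have hτ2 : t / 2 < τ := by cases abs_lt.1 hτ1; linarith
    exact (hCC_t τ s (by linarith)).const_mul (gg H x s)

/-- t-derivative under the integral, second order -/
lemma hasDeriv_T2 {H : ℝ} (hH : 0 < H) (hH1 : H < 1) (x : ℝ) {t : ℝ} (ht : 0 < t) :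
    Integrable (fun s => gg H x s * Ct2 t s) (volume.restrict (Ioi (0:ℝ))) ∧
      HasDerivAt (fun τ => ∫ s in Ioi (0:ℝ), gg H x s * Ct1 τ s)
        (∫ s in Ioi (0:ℝ), gg H x s * Ct2 t s) t := by
  have hk : (0:ℝ) < (t / 2) ^ 2 := by positivity
  apply hasDerivAt_integral_of_dominated_loc_of_deriv_le (s := Metric.ball t (t / 2))
    (F := fun τ s => gg H x s * Ct1 τ s) (F' := fun τ s => gg H x s * Ct2 τ s)
    (bound := fun s => (Real.sqrt (2 * π))⁻¹ * (9 * t / (t / 2) ^ 2) *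
      (s ^ (-H) / ((t / 2) ^ 2 + s ^ 2)))
    (Metric.ball_mem_nhds t (half_pos ht))
  · exact Eventually.of_forall fun τ => meas_aux ((cont_gg H x).mul (cont_Ct1 τ))
  · exact (hasDeriv_T1 hH hH1 x ht).1
  · exact meas_aux ((cont_gg H x).mul (cont_Ct2 t))
  · refine (ae_restrict_iff' measurableSet_Ioi).2 (Eventually.of_forall fun s hs τ hτ => ?_)
    have hs0 : (0:ℝ) < s := hs
    have hτ1 : |τ - t| < t / 2 := by rwa [Metric.mem_ball, Real.dist_eq] at hτ
    have hτ2 : t / 2 < τ := by cases abs_lt.1 hτ1; linarith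
    have hτ3 : τ < 3 * t / 2 := by cases abs_lt.1 hτ1; linarith
    have hden : (0:ℝ) < τ ^ 2 + s ^ 2 := by positivity
    rw [Real.norm_eq_abs, abs_mul, abs_of_nonneg (gg_nonneg H x hs0.le)]
    have hCt2 : |Ct2 τ s| ≤ 9 * t / ((t / 2) ^ 2 * ((t / 2) ^ 2 + s ^ 2)) := by
      unfold Ct2
      rw [abs_div, abs_of_nonneg (by positivity : (0:ℝ) ≤ (τ ^ 2 + s ^ 2) ^ 3), abs_mul,
        abs_of_nonneg (by linarith : (0:ℝ) ≤ 2 * τ)]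
      have h1 : |τ ^ 2 - 3 * s ^ 2| ≤ 3 * (τ ^ 2 + s ^ 2) := by
        rw [abs_le]; constructor <;> nlinarith
      calc 2 * τ * |τ ^ 2 - 3 * s ^ 2| / (τ ^ 2 + s ^ 2) ^ 3
          ≤ 2 * (3 * t / 2) * (3 * (τ ^ 2 + s ^ 2)) / (τ ^ 2 + s ^ 2) ^ 3 := by
            gcongr <;> first | linarith | exact h1
        _ = 9 * t / (τ ^ 2 + s ^ 2) ^ 2 := by
            field_simp
            ring
        _ ≤ 9 * t / ((t / 2) ^ 2 * ((t / 2) ^ 2 + s ^ 2)) := by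
            have hQ : (t / 2) ^ 2 ≤ τ ^ 2 := by nlinarith
            have hA : (t / 2) ^ 2 * ((t / 2) ^ 2 + s ^ 2)
                ≤ ((t / 2) ^ 2 + s ^ 2) * ((t / 2) ^ 2 + s ^ 2) := by nlinarith
            have hB : ((t / 2) ^ 2 + s ^ 2) * ((t / 2) ^ 2 + s ^ 2) ≤ (τ ^ 2 + s ^ 2) ^ 2 := by
              rw [pow_two (τ ^ 2 + s ^ 2)]
              have h0 : (0:ℝ) ≤ (t / 2) ^ 2 + s ^ 2 := by positivity
              exact mul_le_mul (by nlinarith) (by nlinarith) h0 (by positivity)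
            exact div_le_div_of_nonneg_left (by positivity) (by positivity) (by linarith)
    calc gg H x s * |Ct2 τ s|
        ≤ ((Real.sqrt (2 * π))⁻¹ * s ^ (-H)) *
            (9 * t / ((t / 2) ^ 2 * ((t / 2) ^ 2 + s ^ 2))) := by
          refine mul_le_mul (gg_le hs0.le) hCt2 (abs_nonneg _) (by positivity)
      _ = (Real.sqrt (2 * π))⁻¹ * (9 * t / (t / 2) ^ 2) *
            (s ^ (-H) / ((t / 2) ^ 2 + s ^ 2)) := by
          field_simp
  · exact (int_master1 hH hH1 hk).const_mul _
  · refine (ae_restrict_iff' measurableSet_Ioi).2 (Eventually.of_forall fun s hs τ hτ => ?_)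
    have hτ1 : |τ - t| < t / 2 := by rwa [Metric.mem_ball, Real.dist_eq] at hτ
    have hτ2 : t / 2 < τ := by cases abs_lt.1 hτ1; linarith
    exact (hCt1_t τ s (by linarith)).const_mul (gg H x s)

lemma ball_facts {x y : ℝ} (hx : x ≠ 0) (hy : y ∈ Metric.ball x (|x| / 2)) :
    |y| ≤ 3 * |x| / 2 ∧ x ^ 2 / 4 ≤ y ^ 2 := by
  have h1 : |y - x| < |x| / 2 := by rwa [Metric.mem_ball, Real.dist_eq] at hy
  have h2 : |x| - |y| ≤ |y - x| := by
    rw [abs_sub_comm]; exact abs_sub_abs_le_abs_sub x y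
  have h3 : |y| - |x| ≤ |y - x| := abs_sub_abs_le_abs_sub y x
  have h4 : |x| / 2 ≤ |y| := by linarith
  refine ⟨by linarith, ?_⟩
  have := sq_abs y
  have := sq_abs x
  nlinarith [abs_nonneg x, abs_nonneg y]

/-- x-derivative under the integral, first order -/
lemma hasDeriv_X1 {H : ℝ} (hH : 0 < H) (hH1 : H < 1) {x t : ℝ} (hx : x ≠ 0) (ht : 0 < t) :
    Integrable (fun s => gx1 H x s * CC t s) (volume.restrict (Ioi (0:ℝ))) ∧
      HasDerivAt (fun y => ∫ s in Ioi (0:ℝ), gg H y s * CC t s)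
        (∫ s in Ioi (0:ℝ), gx1 H x s * CC t s) x := by
  have hbx : (0:ℝ) < |x| / 2 := by positivity
  apply hasDerivAt_integral_of_dominated_loc_of_deriv_le (s := Metric.ball x (|x| / 2))
    (F := fun y s => gg H y s * CC t s) (F' := fun y s => gx1 H y s * CC t s)
    (bound := fun s => (3 * |x| / 2 * (Real.sqrt (2 * π))⁻¹ * t) *
      (s ^ (-(3 * H)) * Real.exp (-(x ^ 2 / 8 * s ^ (-(2 * H)))) / (t ^ 2 + s ^ 2)))
    (Metric.ball_mem_nhds x hbx)
  · exact Eventually.of_forall fun y => meas_aux ((cont_gg H y).mul (cont_CC t))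
  · exact intOn_gg_CC hH hH1 x ht
  · exact meas_aux ((cont_gx1 H x).mul (cont_CC t))
  · refine (ae_restrict_iff' measurableSet_Ioi).2 (Eventually.of_forall fun s hs y hy => ?_)
    have hs0 : (0:ℝ) < s := hs
    obtain ⟨hy1, hy2⟩ := ball_facts hx hy
    have hσ : (0:ℝ) ≤ s ^ (-(2 * H)) := Real.rpow_nonneg hs0.le _
    have hCC : 0 ≤ CC t s := by unfold CC; positivity
    have hggy : gg H y s ≤ (Real.sqrt (2 * π))⁻¹ * s ^ (-H) *
        Real.exp (-(x ^ 2 / 8 * s ^ (-(2 * H)))) := gg_le_exp hs0.le (by nlinarith)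
    have h3 : s ^ (-(2 * H)) * s ^ (-H) = s ^ (-(3 * H)) := by
      rw [← Real.rpow_add hs0, show -(2 * H) + -H = -(3 * H) by ring]
    rw [Real.norm_eq_abs, abs_mul, abs_of_nonneg hCC]
    unfold gx1
    rw [abs_mul, abs_neg, abs_mul, abs_of_nonneg hσ,
      abs_of_nonneg (gg_nonneg H y hs0.le)]
    calc |y| * s ^ (-(2 * H)) * gg H y s * CC t s
        ≤ (3 * |x| / 2) * s ^ (-(2 * H)) *
            ((Real.sqrt (2 * π))⁻¹ * s ^ (-H) * Real.exp (-(x ^ 2 / 8 * s ^ (-(2 * H))))) *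
            CC t s := by
          exact mul_le_mul_of_nonneg_right
            (mul_le_mul (mul_le_mul_of_nonneg_right hy1 hσ) hggy
              (gg_nonneg H y hs0.le) (by positivity)) hCC
      _ = (3 * |x| / 2 * (Real.sqrt (2 * π))⁻¹ * t) *
            ((s ^ (-(2 * H)) * s ^ (-H)) * Real.exp (-(x ^ 2 / 8 * s ^ (-(2 * H)))) /
              (t ^ 2 + s ^ 2)) := by unfold CC; ring
      _ = (3 * |x| / 2 * (Real.sqrt (2 * π))⁻¹ * t) *
            (s ^ (-(3 * H)) * Real.exp (-(x ^ 2 / 8 * s ^ (-(2 * H)))) / (t ^ 2 + s ^ 2)) := by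
          rw [h3]
  · exact (int_master2 hH (by positivity : (0:ℝ) ≤ 3 * H)
      (by positivity : (0:ℝ) < x ^ 2 / 8) (by positivity : (0:ℝ) < t ^ 2)).const_mul _
  · refine (ae_restrict_iff' measurableSet_Ioi).2 (Eventually.of_forall fun s hs y hy => ?_)
    exact (hgg_x H y s).mul_const (CC t s)

/-- x-derivative under the integral, second order -/
lemma hasDeriv_X2 {H : ℝ} (hH : 0 < H) (hH1 : H < 1) {x t : ℝ} (hx : x ≠ 0) (ht : 0 < t) :
    Integrable (fun s => gx2 H x s * CC t s) (volume.restrict (Ioi (0:ℝ))) ∧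
      HasDerivAt (fun y => ∫ s in Ioi (0:ℝ), gx1 H y s * CC t s)
        (∫ s in Ioi (0:ℝ), gx2 H x s * CC t s) x := by
  have hbx : (0:ℝ) < |x| / 2 := by positivity
  apply hasDerivAt_integral_of_dominated_loc_of_deriv_le (s := Metric.ball x (|x| / 2))
    (F := fun y s => gx1 H y s * CC t s) (F' := fun y s => gx2 H y s * CC t s)
    (bound := fun s =>
      ((3 * |x| / 2) ^ 2 * (Real.sqrt (2 * π))⁻¹ * t) *
        (s ^ (-(5 * H)) * Real.exp (-(x ^ 2 / 8 * s ^ (-(2 * H)))) / (t ^ 2 + s ^ 2)) +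
      ((Real.sqrt (2 * π))⁻¹ * t) *
        (s ^ (-(3 * H)) * Real.exp (-(x ^ 2 / 8 * s ^ (-(2 * H)))) / (t ^ 2 + s ^ 2)))
    (Metric.ball_mem_nhds x hbx)
  · exact Eventually.of_forall fun y => meas_aux ((cont_gx1 H y).mul (cont_CC t))
  · exact (hasDeriv_X1 hH hH1 hx ht).1
  · exact meas_aux ((cont_gx2 H x).mul (cont_CC t))
  · refine (ae_restrict_iff' measurableSet_Ioi).2 (Eventually.of_forall fun s hs y hy => ?_)
    have hs0 : (0:ℝ) < s := hs
    obtain ⟨hy1, hy2⟩ := ball_facts hx hy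
    have hσ : (0:ℝ) ≤ s ^ (-(2 * H)) := Real.rpow_nonneg hs0.le _
    have hCC : 0 ≤ CC t s := by unfold CC; positivity
    have hggy : gg H y s ≤ (Real.sqrt (2 * π))⁻¹ * s ^ (-H) *
        Real.exp (-(x ^ 2 / 8 * s ^ (-(2 * H)))) := gg_le_exp hs0.le (by nlinarith)
    have h3 : s ^ (-(2 * H)) * s ^ (-H) = s ^ (-(3 * H)) := by
      rw [← Real.rpow_add hs0, show -(2 * H) + -H = -(3 * H) by ring]
    have h5 : (s ^ (-(2 * H))) ^ 2 * s ^ (-H) = s ^ (-(5 * H)) := by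
      rw [sq, mul_assoc, h3, ← Real.rpow_add hs0, show -(2 * H) + -(3 * H) = -(5 * H) by ring]
    have hy0 : (0:ℝ) ≤ y ^ 2 := sq_nonneg y
    rw [Real.norm_eq_abs, abs_mul, abs_of_nonneg hCC]
    unfold gx2
    rw [abs_mul, abs_of_nonneg (gg_nonneg H y hs0.le)]
    have habs : |y ^ 2 * (s ^ (-(2 * H))) ^ 2 - s ^ (-(2 * H))|
        ≤ y ^ 2 * (s ^ (-(2 * H))) ^ 2 + s ^ (-(2 * H)) := by
      rw [abs_le]; constructor <;> nlinarith [mul_nonneg hy0 (sq_nonneg (s ^ (-(2 * H))))]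
    calc |y ^ 2 * (s ^ (-(2 * H))) ^ 2 - s ^ (-(2 * H))| * gg H y s * CC t s
        ≤ (y ^ 2 * (s ^ (-(2 * H))) ^ 2 + s ^ (-(2 * H))) *
            ((Real.sqrt (2 * π))⁻¹ * s ^ (-H) * Real.exp (-(x ^ 2 / 8 * s ^ (-(2 * H))))) *
            CC t s := by
          refine mul_le_mul_of_nonneg_right ?_ hCC
          exact mul_le_mul habs hggy (gg_nonneg H y hs0.le) (by positivity)
      _ ≤ ((3 * |x| / 2) ^ 2 * (s ^ (-(2 * H))) ^ 2 + s ^ (-(2 * H))) *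
            ((Real.sqrt (2 * π))⁻¹ * s ^ (-H) * Real.exp (-(x ^ 2 / 8 * s ^ (-(2 * H))))) *
            CC t s := by
          have hysq : y ^ 2 ≤ (3 * |x| / 2) ^ 2 := by nlinarith [sq_abs y, abs_nonneg y]
          refine mul_le_mul_of_nonneg_right (mul_le_mul_of_nonneg_right ?_ (by positivity)) hCC
          exact add_le_add_left (mul_le_mul_of_nonneg_right hysq (by positivity)) _
      _ = ((3 * |x| / 2) ^ 2 * (Real.sqrt (2 * π))⁻¹ * t) *
            (((s ^ (-(2 * H))) ^ 2 * s ^ (-H)) * Real.exp (-(x ^ 2 / 8 * s ^ (-(2 * H)))) /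
              (t ^ 2 + s ^ 2)) +
          ((Real.sqrt (2 * π))⁻¹ * t) *
            ((s ^ (-(2 * H)) * s ^ (-H)) * Real.exp (-(x ^ 2 / 8 * s ^ (-(2 * H)))) /
              (t ^ 2 + s ^ 2)) := by unfold CC; ring
      _ = ((3 * |x| / 2) ^ 2 * (Real.sqrt (2 * π))⁻¹ * t) *
            (s ^ (-(5 * H)) * Real.exp (-(x ^ 2 / 8 * s ^ (-(2 * H)))) / (t ^ 2 + s ^ 2)) +
          ((Real.sqrt (2 * π))⁻¹ * t) *
            (s ^ (-(3 * H)) * Real.exp (-(x ^ 2 / 8 * s ^ (-(2 * H)))) / (t ^ 2 + s ^ 2)) := by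
          rw [h3, h5]
  · exact Integrable.add
      ((int_master2 hH (by positivity : (0:ℝ) ≤ 5 * H)
        (by positivity : (0:ℝ) < x ^ 2 / 8) (by positivity : (0:ℝ) < t ^ 2)).const_mul _)
      ((int_master2 hH (by positivity : (0:ℝ) ≤ 3 * H)
        (by positivity : (0:ℝ) < x ^ 2 / 8) (by positivity : (0:ℝ) < t ^ 2)).const_mul _)
  · refine (ae_restrict_iff' measurableSet_Ioi).2 (Eventually.of_forall fun s hs y hy => ?_)
    exact (hgx1_x H y s).mul_const (CC t s)

section limits
variable {H t : ℝ} (x : ℝ)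

lemma tendsto_gg_atTop (hH : 0 < H) :
    Tendsto (fun s => gg H x s) atTop (𝓝 0) := by
  have t1 : Tendsto (fun s : ℝ => s ^ (-H)) atTop (𝓝 0) := tendsto_rpow_neg_atTop hH
  have tin : Tendsto (fun s : ℝ => -x ^ 2 / 2 * s ^ (-(2 * H))) atTop (𝓝 (-x ^ 2 / 2 * 0)) :=
    (tendsto_rpow_neg_atTop (by linarith)).const_mul _
  have t2 : Tendsto (fun s : ℝ => Real.exp (-x ^ 2 / 2 * s ^ (-(2 * H)))) atTop
      (𝓝 (Real.exp (-x ^ 2 / 2 * 0))) := (Real.continuous_exp.tendsto _).comp tin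
  have := (t1.const_mul ((Real.sqrt (2 * π))⁻¹)).mul t2
  unfold gg
  simpa using this

lemma tendsto_gs1_atTop (hH : 0 < H) :
    Tendsto (fun s => gs1 H x s) atTop (𝓝 0) := by
  have hf1 : Tendsto (fun s : ℝ => H * (x ^ 2 * s ^ (-(2 * H)) - 1)) atTop
      (𝓝 (H * (x ^ 2 * 0 - 1))) :=
    (((tendsto_rpow_neg_atTop (by linarith)).const_mul (x ^ 2)).sub_const 1).const_mul H
  have h := (hf1.mul tendsto_inv_atTop_zero).mul (tendsto_gg_atTop x hH)
  have hfun : (fun s => gs1 H x s)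
      = fun s => H * (x ^ 2 * s ^ (-(2 * H)) - 1) * s⁻¹ * gg H x s := by
    funext s; unfold gs1; rw [div_eq_mul_inv]
  rw [hfun]
  simpa using h

lemma tendsto_den_atTop (t : ℝ) : Tendsto (fun s : ℝ => t ^ 2 + s ^ 2) atTop atTop :=
  tendsto_atTop_add_const_left _ _ (tendsto_pow_atTop two_ne_zero)

lemma tendsto_CC_atTop (t : ℝ) : Tendsto (fun s => CC t s) atTop (𝓝 0) := by
  have h := (tendsto_den_atTop t).inv_tendsto_atTop.const_mul t
  have hfun : (fun s => CC t s) = fun s => t * (fun u : ℝ => t ^ 2 + u ^ 2)⁻¹ s := by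
    funext s; unfold CC; simp [div_eq_mul_inv]
  rw [hfun]
  simpa using h

lemma tendsto_Cs1_atTop (ht : 0 < t) : Tendsto (fun s => Cs1 t s) atTop (𝓝 0) := by
  have hq0 : Tendsto (fun s : ℝ => (t ^ 2 + s ^ 2) / s) atTop atTop := by
    refine tendsto_atTop_mono' _ ?_ tendsto_id
    filter_upwards [eventually_ge_atTop (1:ℝ)] with s hs
    simp only [id_eq]
    rw [le_div_iff₀ (by linarith)]
    nlinarith
  have hq : Tendsto (fun s : ℝ => s / (t ^ 2 + s ^ 2)) atTop (𝓝 0) := by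
    have := hq0.inv_tendsto_atTop
    refine this.congr' ?_
    filter_upwards [eventually_ge_atTop (1:ℝ)] with s hs
    simp [Pi.inv_apply, inv_div]
  have h := (hq.const_mul (-(2 * t))).mul (tendsto_den_atTop t).inv_tendsto_atTop
  have hfun : (fun s => Cs1 t s)
      = fun s => -(2 * t) * (s / (t ^ 2 + s ^ 2)) * (fun u : ℝ => t ^ 2 + u ^ 2)⁻¹ s := by
    funext s
    unfold Cs1
    simp only [Pi.inv_apply, pow_two, div_eq_mul_inv, mul_inv]
    ring
  rw [hfun]
  simpa using h

lemma tendsto_Phi_atTop (hH : 0 < H) (ht : 0 < t) :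
    Tendsto (fun s => Phi H x t s) atTop (𝓝 0) := by
  have h := (((tendsto_gg_atTop x hH).mul (tendsto_Cs1_atTop ht)).sub
    ((tendsto_gs1_atTop x hH).mul (tendsto_CC_atTop t))).const_mul (t ^ 2) |>.add
    ((tendsto_gs1_atTop x hH).const_mul t)
  unfold Phi
  simpa using h

lemma tendsto_sigma_zero (hH : 0 < H) :
    Tendsto (fun s : ℝ => s ^ (-(2 * H))) (𝓝[>] (0:ℝ)) atTop := by
  have h := (tendsto_rpow_atTop (by linarith : (0:ℝ) < 2 * H)).comp tendsto_inv_nhdsGT_zero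
  refine h.congr' ?_
  filter_upwards [self_mem_nhdsWithin] with s hs
  have hs0 : (0:ℝ) < s := hs
  show (s⁻¹) ^ (2 * H) = s ^ (-(2 * H))
  rw [← Real.rpow_neg_one s, ← Real.rpow_mul hs0.le,
    show (-1:ℝ) * (2 * H) = -(2 * H) by ring]

lemma tendsto_gg_zero {x : ℝ} (hH : 0 < H) (hx : x ≠ 0) :
    Tendsto (fun s => gg H x s) (𝓝[>] (0:ℝ)) (𝓝 0) := by
  have hb : (0:ℝ) < x ^ 2 / 2 := by positivity
  have hφ := tendsto_rpow_mul_exp_neg_mul_atTop_nhds_zero (1/2) (x ^ 2 / 2) hb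
  have h := (hφ.comp (tendsto_sigma_zero hH)).const_mul ((Real.sqrt (2 * π))⁻¹)
  rw [mul_zero] at h
  refine h.congr' ?_
  filter_upwards [self_mem_nhdsWithin] with s hs
  have hs0 : (0:ℝ) < s := hs
  unfold gg
  rw [Function.comp_apply, ← Real.rpow_mul hs0.le,
    show -(2 * H) * (1/2 : ℝ) = -H by ring]
  ring_nf

lemma tendsto_gs1_zero {x : ℝ} (hH : 0 < H) (hx : x ≠ 0) :
    Tendsto (fun s => gs1 H x s) (𝓝[>] (0:ℝ)) (𝓝 0) := by
  have hb : (0:ℝ) < x ^ 2 / 2 := by positivity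
  have hA := tendsto_rpow_mul_exp_neg_mul_atTop_nhds_zero (1 + 1/(2*H) + 1/2) (x ^ 2 / 2) hb
  have hB := tendsto_rpow_mul_exp_neg_mul_atTop_nhds_zero (1/(2*H) + 1/2) (x ^ 2 / 2) hb
  have hψ : Tendsto (fun u : ℝ =>
      H * (Real.sqrt (2 * π))⁻¹ * (x ^ 2 * (u ^ (1 + 1/(2*H) + 1/2) * Real.exp (-(x ^ 2 / 2) * u))
        - u ^ (1/(2*H) + 1/2) * Real.exp (-(x ^ 2 / 2) * u))) atTop (𝓝 0) := by
    have := ((hA.const_mul (x ^ 2)).sub hB).const_mul (H * (Real.sqrt (2 * π))⁻¹)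
    simpa using this
  have h := hψ.comp (tendsto_sigma_zero hH)
  refine h.congr' ?_
  filter_upwards [self_mem_nhdsWithin] with s hs
  have hs0 : (0:ℝ) < s := hs
  have hHne : (2 * H) ≠ 0 := by positivity
  rw [Function.comp_apply]
  have e1 : (s ^ (-(2 * H))) ^ (1/(2*H) + 1/2 : ℝ) = s⁻¹ * s ^ (-H) := by
    rw [← Real.rpow_mul hs0.le, show -(2*H) * (1/(2*H) + 1/2) = -1 + -H by field_simp; ring,
      Real.rpow_add hs0, Real.rpow_neg_one]
  have e2 : (s ^ (-(2 * H))) ^ (1 + 1/(2*H) + 1/2 : ℝ)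
      = s ^ (-(2*H)) * (s⁻¹ * s ^ (-H)) := by
    rw [← Real.rpow_mul hs0.le,
      show -(2*H) * (1 + 1/(2*H) + 1/2) = -(2*H) + (-1 + -H) by field_simp; ring,
      Real.rpow_add hs0, Real.rpow_add hs0, Real.rpow_neg_one]
  rw [e1, e2]
  unfold gs1 gg
  rw [show -(x ^ 2 / 2) * s ^ (-(2*H)) = -x ^ 2 / 2 * s ^ (-(2 * H)) by ring]
  field_simp

lemma tendsto_CC_zero (ht : 0 < t) :
    Tendsto (fun s => CC t s) (𝓝[>] (0:ℝ)) (𝓝 (CC t 0)) := by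
  have hc : ContinuousAt (fun s => CC t s) 0 := by
    unfold CC
    exact ContinuousAt.div continuousAt_const (by fun_prop) (by norm_num; positivity)
  exact hc.continuousWithinAt.tendsto

lemma tendsto_Cs1_zero (ht : 0 < t) :
    Tendsto (fun s => Cs1 t s) (𝓝[>] (0:ℝ)) (𝓝 0) := by
  have hc : ContinuousAt (fun s => Cs1 t s) 0 := by
    unfold Cs1
    exact ContinuousAt.div (by fun_prop) (by fun_prop) (by norm_num; positivity)
  have h0 : Cs1 t 0 = 0 := by unfold Cs1; norm_num
  have := (hc.continuousWithinAt (s := Ioi 0)).tendsto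
  rwa [h0] at this

lemma Phi_zero_val {x : ℝ} (hH : 0 < H) : Phi H x t 0 = 0 := by
  have h1 : (0:ℝ) ^ (-H) = 0 := Real.zero_rpow (by simp [hH.ne'])
  simp [Phi, gs1, gg, Cs1, h1]

lemma tendsto_Phi_zero {x : ℝ} (hH : 0 < H) (hx : x ≠ 0) (ht : 0 < t) :
    Tendsto (fun s => Phi H x t s) (𝓝[>] (0:ℝ)) (𝓝 0) := by
  have h := (((tendsto_gg_zero hH hx).mul (tendsto_Cs1_zero ht)).sub
    ((tendsto_gs1_zero hH hx).mul (tendsto_CC_zero ht))).const_mul (t ^ 2) |>.add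
    ((tendsto_gs1_zero hH hx).const_mul t)
  unfold Phi
  simpa using h

lemma Phi_cwa {x : ℝ} (hH : 0 < H) (hx : x ≠ 0) (ht : 0 < t) :
    ContinuousWithinAt (fun s => Phi H x t s) (Ici (0:ℝ)) 0 := by
  show Tendsto (fun s => Phi H x t s) (𝓝[Ici 0] 0) (𝓝 (Phi H x t 0))
  rw [Phi_zero_val hH, ← Set.Ioi_insert, nhdsWithin_insert, tendsto_sup]
  exact ⟨by simpa [Phi_zero_val hH] using tendsto_pure_nhds (fun s => Phi H x t s) 0,
    tendsto_Phi_zero hH hx ht⟩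

end limits

lemma p_eq (H x t : ℝ) :
    fbmCauchyDensity H x t = (2 / π) * ∫ s in Ioi (0:ℝ), gg H x s * CC t s := by
  unfold fbmCauchyDensity
  congr 1
  refine setIntegral_congr_fun measurableSet_Ioi fun s hs => ?_
  have hs0 : (0:ℝ) < s := hs
  have hsH : (0:ℝ) < s ^ H := Real.rpow_pos_of_pos hs0 H
  have h2 : (s ^ H) ^ (2:ℕ) = s ^ (2 * H) := by
    rw [← Real.rpow_natCast (s ^ H) 2, ← Real.rpow_mul hs0.le]
    norm_num [mul_comm]
  have h1 : Real.sqrt (2 * π * s ^ (2 * H)) = Real.sqrt (2 * π) * s ^ H := by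
    rw [Real.sqrt_mul (by positivity), ← h2, Real.sqrt_sq hsH.le]
  have hAB : -x ^ 2 / (2 * s ^ (2 * H)) = -x ^ 2 / 2 * s ^ (-(2 * H)) := by
    rw [Real.rpow_neg hs0.le]; ring
  unfold gg CC
  rw [h1, hAB, Real.rpow_neg hs0.le (2 * H), Real.rpow_neg hs0.le H,
    div_eq_mul_inv, mul_inv]
  ring

lemma key_integral {H : ℝ} (hH : 0 < H) (hH1 : H < 1) {x t : ℝ} (hx : x ≠ 0) (ht : 0 < t) :
    t ^ 2 * ∫ s in Ioi (0:ℝ), gg H x s * Ct2 t s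
      = (-(H * (H - 1)) + 2 * H ^ 2) * (∫ s in Ioi (0:ℝ), gg H x s * CC t s)
        + (-(H * (H - 1)) * x + 4 * H ^ 2 * x) * (∫ s in Ioi (0:ℝ), gx1 H x s * CC t s)
        + H ^ 2 * x ^ 2 * (∫ s in Ioi (0:ℝ), gx2 H x s * CC t s) := by
  have hIgg := intOn_gg_CC hH hH1 x ht
  have hIx1 := (hasDeriv_X1 hH hH1 hx ht).1
  have hIx2 := (hasDeriv_X2 hH hH1 hx ht).1
  have hIT2 := (hasDeriv_T2 hH hH1 x ht).1
  set a : ℝ := -(H * (H - 1)) + 2 * H ^ 2 with ha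
  set b : ℝ := -(H * (H - 1)) * x + 4 * H ^ 2 * x with hb
  set c : ℝ := H ^ 2 * x ^ 2 with hc
  have hderiv : ∀ s ∈ Ioi (0:ℝ), HasDerivAt (fun u => Phi H x t u)
      (t ^ 2 * (gg H x s * (-(2 * t) * (t ^ 2 - 3 * s ^ 2) / (t ^ 2 + s ^ 2) ^ 3)
        - gs2 H x s * CC t s) + t * gs2 H x s) s :=
    fun s hs => hPhi_s H x t s hs ht
  have hWint : IntegrableOn (fun s => -(t ^ 2) * (gg H x s * Ct2 t s)
      + (a * (gg H x s * CC t s) + (b * (gx1 H x s * CC t s)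
        + c * (gx2 H x s * CC t s)))) (Ioi (0:ℝ)) :=
    (hIT2.const_mul _).add ((hIgg.const_mul _).add ((hIx1.const_mul _).add (hIx2.const_mul _)))
  have hEq : EqOn (fun s => -(t ^ 2) * (gg H x s * Ct2 t s)
      + (a * (gg H x s * CC t s) + (b * (gx1 H x s * CC t s) + c * (gx2 H x s * CC t s))))
      (fun s => t ^ 2 * (gg H x s * (-(2 * t) * (t ^ 2 - 3 * s ^ 2) / (t ^ 2 + s ^ 2) ^ 3)
        - gs2 H x s * CC t s) + t * gs2 H x s) (Ioi (0:ℝ)) := by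
    intro s hs
    dsimp only
    rw [key_id H x t s hs ht, ha, hb, hc]
    ring
  have hint' : IntegrableOn (fun s => t ^ 2 * (gg H x s *
      (-(2 * t) * (t ^ 2 - 3 * s ^ 2) / (t ^ 2 + s ^ 2) ^ 3)
      - gs2 H x s * CC t s) + t * gs2 H x s) (Ioi (0:ℝ)) :=
    hWint.congr_fun hEq measurableSet_Ioi
  have hFTC := integral_Ioi_of_hasDerivAt_of_tendsto
    (Phi_cwa hH hx ht) hderiv hint' (tendsto_Phi_atTop x hH ht)
  rw [Phi_zero_val hH, sub_zero] at hFTC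
  have h2 : ∫ s in Ioi (0:ℝ), (-(t ^ 2) * (gg H x s * Ct2 t s)
      + (a * (gg H x s * CC t s) + (b * (gx1 H x s * CC t s)
        + c * (gx2 H x s * CC t s)))) = 0 :=
    (setIntegral_congr_fun measurableSet_Ioi hEq).trans hFTC
  have hJ1 : Integrable (fun s => b * (gx1 H x s * CC t s) + c * (gx2 H x s * CC t s))
      (volume.restrict (Ioi (0:ℝ))) := (hIx1.const_mul b).add (hIx2.const_mul c)
  have hJ2 : Integrable (fun s => a * (gg H x s * CC t s)
      + (b * (gx1 H x s * CC t s) + c * (gx2 H x s * CC t s)))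
      (volume.restrict (Ioi (0:ℝ))) := (hIgg.const_mul a).add hJ1
  rw [integral_add (hIT2.const_mul (-(t ^ 2))) hJ2,
    integral_add (hIgg.const_mul a) hJ1,
    integral_add (hIx1.const_mul b) (hIx2.const_mul c),
    integral_const_mul, integral_const_mul, integral_const_mul, integral_const_mul] at h2
  linarith [h2]

/-- For `x ≠ 0` and `t > 0` the density of `B_H(|C(t)|)` satisfies
`t² ∂²p/∂t² = −H(H−1) ∂/∂x (x p) + H² ∂²/∂x² (x² p)`. -/
theorem fbmCauchyDensity_pde (H : ℝ) (hH : H ∈ Set.Ioo (0 : ℝ) 1) :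
    ∀ x t : ℝ, x ≠ 0 → 0 < t →
      t ^ 2 * iteratedDeriv 2 (fun τ => fbmCauchyDensity H x τ) t
        = -(H * (H - 1)) * deriv (fun y => y * fbmCauchyDensity H y t) x
          + H ^ 2 * iteratedDeriv 2 (fun y => y ^ 2 * fbmCauchyDensity H y t) x := by
  obtain ⟨hH0, hH1⟩ := hH
  intro x t hx ht
  have hfeqt : (fun τ => fbmCauchyDensity H x τ)
      = fun τ => (2 / π) * ∫ s in Ioi (0:ℝ), gg H x s * CC τ s :=
    funext fun τ => p_eq H x τ
  have hd1 : ∀ τ : ℝ, 0 < τ → HasDerivAt (fun τ' => fbmCauchyDensity H x τ')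
      ((2 / π) * ∫ s in Ioi (0:ℝ), gg H x s * Ct1 τ s) τ := by
    intro τ hτ
    rw [hfeqt]
    exact ((hasDeriv_T1 hH0 hH1 x hτ).2).const_mul (2 / π)
  have hde : deriv (fun τ => fbmCauchyDensity H x τ)
      =ᶠ[𝓝 t] fun τ => (2 / π) * ∫ s in Ioi (0:ℝ), gg H x s * Ct1 τ s := by
    filter_upwards [isOpen_Ioi.mem_nhds (show t ∈ Ioi (0:ℝ) from ht)] with τ hτ
    exact (hd1 τ hτ).deriv
  have hLHS : iteratedDeriv 2 (fun τ => fbmCauchyDensity H x τ) t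
      = (2 / π) * ∫ s in Ioi (0:ℝ), gg H x s * Ct2 t s := by
    rw [iteratedDeriv_succ, iteratedDeriv_one, hde.deriv_eq]
    exact (((hasDeriv_T2 hH0 hH1 x ht).2).const_mul (2 / π)).deriv
  have hdX : ∀ y : ℝ, y ≠ 0 → HasDerivAt (fun y' => fbmCauchyDensity H y' t)
      ((2 / π) * ∫ s in Ioi (0:ℝ), gx1 H y s * CC t s) y := by
    intro y hy
    have hfeqx : (fun y' => fbmCauchyDensity H y' t)
        = fun y' => (2 / π) * ∫ s in Ioi (0:ℝ), gg H y' s * CC t s :=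
      funext fun y' => p_eq H y' t
    rw [hfeqx]
    exact ((hasDeriv_X1 hH0 hH1 hy ht).2).const_mul (2 / π)
  have hRHS1 : deriv (fun y => y * fbmCauchyDensity H y t) x
      = fbmCauchyDensity H x t
        + x * ((2 / π) * ∫ s in Ioi (0:ℝ), gx1 H x s * CC t s) := by
    have h := (hasDerivAt_id' x).mul (hdX x hx)
    refine h.deriv.trans ?_
    ring
  have hde2 : deriv (fun y => y ^ 2 * fbmCauchyDensity H y t)
      =ᶠ[𝓝 x] fun y => 2 * y * fbmCauchyDensity H y t
        + y ^ 2 * ((2 / π) * ∫ s in Ioi (0:ℝ), gx1 H y s * CC t s) := by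
    filter_upwards [isOpen_compl_singleton.mem_nhds hx] with y hy
    have h := (hasDerivAt_pow 2 y).mul (hdX y hy)
    refine h.deriv.trans ?_
    ring
  have hRHS2 : iteratedDeriv 2 (fun y => y ^ 2 * fbmCauchyDensity H y t) x
      = 2 * fbmCauchyDensity H x t
        + 4 * x * ((2 / π) * ∫ s in Ioi (0:ℝ), gx1 H x s * CC t s)
        + x ^ 2 * ((2 / π) * ∫ s in Ioi (0:ℝ), gx2 H x s * CC t s) := by
    rw [iteratedDeriv_succ, iteratedDeriv_one, hde2.deriv_eq]
    have ha : HasDerivAt (fun y => 2 * y * fbmCauchyDensity H y t)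
        (2 * fbmCauchyDensity H x t
          + 2 * x * ((2 / π) * ∫ s in Ioi (0:ℝ), gx1 H x s * CC t s)) x := by
      have h := ((hasDerivAt_id' x).const_mul 2).mul (hdX x hx)
      refine h.congr_deriv ?_
      ring
    have hb : HasDerivAt (fun y => y ^ 2 * ((2 / π) * ∫ s in Ioi (0:ℝ), gx1 H y s * CC t s))
        (2 * x * ((2 / π) * ∫ s in Ioi (0:ℝ), gx1 H x s * CC t s)
          + x ^ 2 * ((2 / π) * ∫ s in Ioi (0:ℝ), gx2 H x s * CC t s)) x := by
      have h := (hasDerivAt_pow 2 x).mul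
        (((hasDeriv_X2 hH0 hH1 hx ht).2).const_mul (2 / π))
      refine h.congr_deriv ?_
      ring
    refine (ha.add hb).deriv.trans ?_
    ring
  rw [hLHS, hRHS1, hRHS2, p_eq H x t]
  have hKEY := key_integral hH0 hH1 hx ht
  linear_combination (2 / π) * hKEY
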